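/- Let K ∈ ℝ, N > 1, δ > 0, and let λ > 0 satisfy (K−δ)λ² < (N−1)π². Let f : [0,1] → ℝ be continuous on [0,1], twice continuously differentiable on (0,1), and nonnegative, and assume that f''(s) + ((K−δ)λ²/N) f(s) ≥ 0 for every s ∈ (0,1). Then for every t ∈ [0,1], f(t) ≤ τ_{K−δ,N}^{(1−t)}(λ) f(0) + τ_{K−δ,N}^{(t)}(λ) f(1). -/

import Mathlib

open Real Set



/-- Distortion coefficient `σ_Λ^{(t)}(θ)`. -/
noncomputable def sigmaCoeff (Λ t θ : ℝ) : ℝ :=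
  if Λ * θ ^ 2 = 0 then t
  else if 0 < Λ * θ ^ 2 then
    Real.sin (t * (θ * Real.sqrt Λ)) / Real.sin (θ * Real.sqrt Λ)
  else
    Real.sinh (t * (θ * Real.sqrt (-Λ))) / Real.sinh (θ * Real.sqrt (-Λ))

/-- Distortion coefficient `τ_{K,N}^{(t)}(θ) = t^{1/N} (σ_{K/(N-1)}^{(t)}(θ))^{1-1/N}`. -/
noncomputable def tauCoeff (K N t θ : ℝ) : ℝ :=
  t ^ (1 / N) * (sigmaCoeff (K / (N - 1)) t θ) ^ (1 - 1 / N)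


lemma exists_phi (Λ : ℝ) (hΛ : Λ < π ^ 2) :
    ∃ φ φ' φ'' : ℝ → ℝ,
      (∀ t, HasDerivAt φ (φ' t) t) ∧ (∀ t, HasDerivAt φ' (φ'' t) t) ∧
      (∀ t, φ'' t = -(Λ * φ t)) ∧ (∀ t ∈ Icc (0:ℝ) 1, 0 < φ t) := by
  rcases le_or_gt Λ 0 with h | h
  · set ν := Real.sqrt (-Λ) with hν
    have hν2 : ν ^ 2 = -Λ := Real.sq_sqrt (by linarith)
    refine ⟨fun t => Real.cosh (ν * (t - 1/2)), fun t => ν * Real.sinh (ν * (t - 1/2)),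
      fun t => ν ^ 2 * Real.cosh (ν * (t - 1/2)), fun t => ?_, fun t => ?_, fun t => ?_,
      fun t _ => Real.cosh_pos _⟩
    · have hd : HasDerivAt (fun t : ℝ => ν * (t - 1/2)) ν t := by
        exact (((hasDerivAt_id t).sub_const (1/2)).const_mul ν).congr_deriv (mul_one ν)
      exact ((Real.hasDerivAt_cosh (ν * (t - 1/2))).comp t hd).congr_deriv (mul_comm _ _)
    · have hd : HasDerivAt (fun t : ℝ => ν * (t - 1/2)) ν t := by
        exact (((hasDerivAt_id t).sub_const (1/2)).const_mul ν).congr_deriv (mul_one ν)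
      have := ((Real.hasDerivAt_sinh (ν * (t - 1/2))).comp t hd).const_mul ν
      simpa [sq, mul_comm, mul_assoc, mul_left_comm] using this
    · rw [hν2]; ring
  · set ω := Real.sqrt Λ with hω
    have hω2 : ω ^ 2 = Λ := Real.sq_sqrt h.le
    have hωpos : 0 < ω := Real.sqrt_pos.mpr h
    have hωπ : ω < π := by
      calc ω = Real.sqrt Λ := rfl
        _ < Real.sqrt (π ^ 2) := Real.sqrt_lt_sqrt h.le hΛ
        _ = π := Real.sqrt_sq Real.pi_pos.le
    refine ⟨fun t => Real.cos (ω * (t - 1/2)), fun t => -(ω * Real.sin (ω * (t - 1/2))),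
      fun t => -(ω ^ 2 * Real.cos (ω * (t - 1/2))), fun t => ?_, fun t => ?_, fun t => ?_,
      fun t ht => ?_⟩
    · have hd : HasDerivAt (fun t : ℝ => ω * (t - 1/2)) ω t := by
        exact (((hasDerivAt_id t).sub_const (1/2)).const_mul ω).congr_deriv (mul_one ω)
      have := (Real.hasDerivAt_cos (ω * (t - 1/2))).comp t hd
      exact this.congr_deriv (by ring)
    · have hd : HasDerivAt (fun t : ℝ => ω * (t - 1/2)) ω t := by
        exact (((hasDerivAt_id t).sub_const (1/2)).const_mul ω).congr_deriv (mul_one ω)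
      have := (((Real.hasDerivAt_sin (ω * (t - 1/2))).comp t hd).const_mul ω).neg
      exact this.congr_deriv (by ring)
    · rw [hω2]
    · apply Real.cos_pos_of_mem_Ioo
      constructor
      · nlinarith [ht.1, ht.2]
      · nlinarith [ht.1, ht.2]

lemma comp_core (Λ : ℝ) (hΛ : Λ < π ^ 2)
    (u u' u'' : ℝ → ℝ)
    (hu : ContinuousOn u (Icc 0 1))
    (hu' : ∀ s ∈ Ioo (0:ℝ) 1, HasDerivAt u (u' s) s)
    (hu'' : ∀ s ∈ Ioo (0:ℝ) 1, HasDerivAt u' (u'' s) s)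
    (hode : ∀ s ∈ Ioo (0:ℝ) 1, 0 ≤ u'' s + Λ * u s)
    (h0 : u 0 ≤ 0) (h1 : u 1 ≤ 0) :
    ∀ t ∈ Icc (0:ℝ) 1, u t ≤ 0 := by
  obtain ⟨φ, φ', φ'', hφd, hφd', hφode, hφpos⟩ := exists_phi Λ hΛ
  by_contra hcon
  push_neg at hcon
  obtain ⟨t0, ht0, hpos⟩ := hcon
  have ht0i : t0 ∈ Ioo (0:ℝ) 1 := by
    rcases eq_or_lt_of_le ht0.1 with h | h
    · exact absurd hpos (by rw [← h]; exact not_lt.mpr h0)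
    rcases eq_or_lt_of_le ht0.2 with h' | h'
    · exact absurd hpos (by rw [h']; exact not_lt.mpr h1)
    exact ⟨h, h'⟩
  have hφc : Continuous φ := by
    rw [continuous_iff_continuousAt]; exact fun t => (hφd t).continuousAt
  set q : ℝ → ℝ := fun t => u t / φ t with hq
  set W : ℝ → ℝ := fun t => u' t * φ t - u t * φ' t with hW
  have hqc : ContinuousOn q (Icc 0 1) :=
    hu.div (hφc.continuousOn) (fun x hx => (hφpos x hx).ne')
  have hq' : ∀ s ∈ Ioo (0:ℝ) 1, HasDerivAt q (W s / φ s ^ 2) s := fun s hs =>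
    (hu' s hs).div (hφd s) (hφpos s (Ioo_subset_Icc_self hs)).ne'
  -- MVT on [0, t0]
  obtain ⟨ξ, hξ, hξs⟩ := exists_hasDerivAt_eq_slope q (fun s => W s / φ s ^ 2) ht0i.1
    (hqc.mono (Icc_subset_Icc le_rfl ht0.2))
    (fun x hx => hq' x ⟨hx.1, lt_of_lt_of_le hx.2 ht0.2⟩)
  obtain ⟨η, hη, hηs⟩ := exists_hasDerivAt_eq_slope q (fun s => W s / φ s ^ 2) ht0i.2
    (hqc.mono (Icc_subset_Icc ht0.1 le_rfl))
    (fun x hx => hq' x ⟨lt_of_le_of_lt ht0.1 hx.1, hx.2⟩)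
  have hφt0 : 0 < φ t0 := hφpos t0 ht0
  have hq0 : q 0 ≤ 0 :=
    div_nonpos_of_nonpos_of_nonneg h0 (hφpos 0 (by constructor <;> norm_num)).le
  have hq1 : q 1 ≤ 0 :=
    div_nonpos_of_nonpos_of_nonneg h1 (hφpos 1 (by constructor <;> norm_num)).le
  have hqt0 : 0 < q t0 := div_pos hpos hφt0
  have hξmem : ξ ∈ Ioo (0:ℝ) 1 := ⟨hξ.1, lt_trans hξ.2 ht0i.2⟩
  have hηmem : η ∈ Ioo (0:ℝ) 1 := ⟨lt_trans ht0i.1 hη.1, hη.2⟩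
  have hWξ : 0 < W ξ := by
    have hslope : 0 < (q t0 - q 0) / (t0 - 0) := div_pos (by linarith) (by linarith [ht0i.1])
    have hφξ := hφpos ξ (Ioo_subset_Icc_self hξmem)
    have hWeq : W ξ = (q t0 - q 0) / (t0 - 0) * φ ξ ^ 2 :=
      (div_eq_iff (by positivity)).mp hξs
    rw [hWeq]; positivity
  have hWη : W η < 0 := by
    have hslope : (q 1 - q t0) / (1 - t0) < 0 :=
      div_neg_of_neg_of_pos (by linarith) (by linarith [ht0i.2])
    have hφη := hφpos η (Ioo_subset_Icc_self hηmem)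
    have hWeq : W η = (q 1 - q t0) / (1 - t0) * φ η ^ 2 :=
      (div_eq_iff (by positivity)).mp hηs
    rw [hWeq]
    exact mul_neg_of_neg_of_pos hslope (by positivity)
  -- W is monotone via MVT on [ξ, η]
  have hξη : ξ < η := lt_trans hξ.2 hη.1
  have hWd : ∀ s ∈ Ioo (0:ℝ) 1, HasDerivAt W (φ s * (u'' s + Λ * u s)) s := by
    intro s hs
    have h1' := (hu'' s hs).mul (hφd s)
    have h2' := (hu' s hs).mul (hφd' s)
    have := h1'.sub h2'
    refine this.congr_deriv ?_
    rw [hφode s]; ring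
  have hsub : Icc ξ η ⊆ Ioo (0:ℝ) 1 := fun x hx =>
    ⟨lt_of_lt_of_le hξmem.1 hx.1, lt_of_le_of_lt hx.2 hηmem.2⟩
  have hWc : ContinuousOn W (Icc ξ η) := fun x hx =>
    ((hWd x (hsub hx)).continuousAt).continuousWithinAt
  obtain ⟨c, hc, hcs⟩ := exists_hasDerivAt_eq_slope W (fun s => φ s * (u'' s + Λ * u s)) hξη
    hWc (fun x hx => hWd x (hsub (Ioo_subset_Icc_self hx)))
  have hcmem : c ∈ Ioo (0:ℝ) 1 := hsub (Ioo_subset_Icc_self hc)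
  have hge : 0 ≤ φ c * (u'' c + Λ * u c) :=
    mul_nonneg (hφpos c (Ioo_subset_Icc_self hcmem)).le (hode c hcmem)
  rw [hcs] at hge
  have : 0 ≤ W η - W ξ := by
    have := mul_nonneg hge (by linarith : (0:ℝ) ≤ η - ξ)
    rwa [div_mul_cancel₀] at this
    linarith
  linarith



lemma sigma_one_def (c t : ℝ) : sigmaCoeff c t 1 =
    if c = 0 then t else if 0 < c then Real.sin (t * Real.sqrt c) / Real.sin (Real.sqrt c)
    else Real.sinh (t * Real.sqrt (-c)) / Real.sinh (Real.sqrt (-c)) := by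
  simp [sigmaCoeff]

lemma sigma_scale (c θ : ℝ) (hθ : 0 < θ) (t : ℝ) :
    sigmaCoeff c t θ = sigmaCoeff (c * θ ^ 2) t 1 := by
  rw [sigma_one_def, sigmaCoeff]
  have hθ2 : 0 < θ ^ 2 := by positivity
  split_ifs with h0 hpos
  · rfl
  · have hc : 0 < c := by nlinarith [hpos]
    have he : θ * Real.sqrt c = Real.sqrt (c * θ ^ 2) := by
      rw [Real.sqrt_mul hc.le, Real.sqrt_sq hθ.le]; ring
    rw [he]
  · have h' : c * θ ^ 2 < 0 := lt_of_le_of_ne (not_lt.mp hpos) h0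
    have hc : c < 0 := by nlinarith
    have he : θ * Real.sqrt (-c) = Real.sqrt (-(c * θ ^ 2)) := by
      rw [show -(c * θ ^ 2) = (-c) * θ ^ 2 by ring, Real.sqrt_mul (by linarith),
        Real.sqrt_sq hθ.le]
      ring
    rw [he]

lemma sigma_zero (c : ℝ) : sigmaCoeff c 0 1 = 0 := by
  rw [sigma_one_def]
  split_ifs <;> simp

lemma sigma_one' (c : ℝ) (hc : c < π ^ 2) : sigmaCoeff c 1 1 = 1 := by
  rw [sigma_one_def]
  split_ifs with h1 h2
  · rfl
  · rw [one_mul, div_self]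
    have h3 : Real.sqrt c < π := by
      calc Real.sqrt c < Real.sqrt (π ^ 2) := Real.sqrt_lt_sqrt h2.le hc
        _ = π := Real.sqrt_sq Real.pi_pos.le
    exact (Real.sin_pos_of_pos_of_lt_pi (Real.sqrt_pos.mpr h2) h3).ne'
  · rw [one_mul, div_self]
    have hc' : 0 < -c := by
      rcases lt_trichotomy c 0 with h | h | h
      · linarith
      · exact absurd h h1
      · exact absurd h h2
    exact (Real.sinh_pos_iff.mpr (Real.sqrt_pos.mpr hc')).ne'

lemma sigma_pos (c : ℝ) (hc : c < π ^ 2) {t : ℝ} (ht : t ∈ Ioc (0:ℝ) 1) :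
    0 < sigmaCoeff c t 1 := by
  rw [sigma_one_def]
  split_ifs with h1 h2
  · exact ht.1
  · have hsc : 0 < Real.sqrt c := Real.sqrt_pos.mpr h2
    have h3 : Real.sqrt c < π := by
      calc Real.sqrt c < Real.sqrt (π ^ 2) := Real.sqrt_lt_sqrt h2.le hc
        _ = π := Real.sqrt_sq Real.pi_pos.le
    apply div_pos
    · apply Real.sin_pos_of_pos_of_lt_pi (mul_pos ht.1 hsc)
      calc t * Real.sqrt c ≤ 1 * Real.sqrt c := by nlinarith [ht.2]
        _ = Real.sqrt c := one_mul _
        _ < π := h3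
    · exact Real.sin_pos_of_pos_of_lt_pi hsc h3
  · have hc' : 0 < -c := by
      rcases lt_trichotomy c 0 with h | h | h
      · linarith
      · exact absurd h h1
      · exact absurd h h2
    have hsc : 0 < Real.sqrt (-c) := Real.sqrt_pos.mpr hc'
    exact div_pos (Real.sinh_pos_iff.mpr (mul_pos ht.1 hsc)) (Real.sinh_pos_iff.mpr hsc)

lemma sigma_cont (c : ℝ) : Continuous (fun t => sigmaCoeff c t 1) := by
  simp only [sigma_one_def]
  split_ifs with h1 h2
  · exact continuous_id
  · exact (Real.continuous_sin.comp (continuous_id.mul continuous_const)).div_const _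
  · exact (Real.continuous_sinh.comp (continuous_id.mul continuous_const)).div_const _

lemma sigma_hasDeriv (c : ℝ) :
    ∃ S' : ℝ → ℝ, (∀ t, HasDerivAt (fun t => sigmaCoeff c t 1) (S' t) t) ∧
      (∀ t, HasDerivAt S' (-(c * sigmaCoeff c t 1)) t) := by
  simp only [sigma_one_def]
  split_ifs with h1 h2
  · exact ⟨fun _ => 1, fun t => hasDerivAt_id t, fun t => by
      simpa [h1] using (hasDerivAt_const t (1:ℝ))⟩
  · set ω := Real.sqrt c with hω
    have hω2 : ω * ω = c := Real.mul_self_sqrt h2.le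
    refine ⟨fun t => ω * Real.cos (t * ω) / Real.sin ω, fun t => ?_, fun t => ?_⟩
    · have hd : HasDerivAt (fun t : ℝ => t * ω) ω t := by
        simpa using (hasDerivAt_id t).mul_const ω
      have := ((Real.hasDerivAt_sin (t * ω)).comp t hd).div_const (Real.sin ω)
      refine this.congr_deriv ?_
      ring
    · have hd : HasDerivAt (fun t : ℝ => t * ω) ω t := by
        simpa using (hasDerivAt_id t).mul_const ω
      have := (((Real.hasDerivAt_cos (t * ω)).comp t hd).const_mul ω).div_const (Real.sin ω)
      refine this.congr_deriv ?_
      rw [← hω2]; ring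
  · set ν := Real.sqrt (-c) with hν
    have hν2 : ν * ν = -c := Real.mul_self_sqrt (by
      rcases lt_trichotomy c 0 with h | h | h
      · linarith
      · exact absurd h h1
      · exact absurd h h2)
    refine ⟨fun t => ν * Real.cosh (t * ν) / Real.sinh ν, fun t => ?_, fun t => ?_⟩
    · have hd : HasDerivAt (fun t : ℝ => t * ν) ν t := by
        simpa using (hasDerivAt_id t).mul_const ν
      have := ((Real.hasDerivAt_sinh (t * ν)).comp t hd).div_const (Real.sinh ν)
      refine this.congr_deriv ?_
      ring
    · have hd : HasDerivAt (fun t : ℝ => t * ν) ν t := by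
        simpa using (hasDerivAt_id t).mul_const ν
      have := (((Real.hasDerivAt_cosh (t * ν)).comp t hd).const_mul ν).div_const (Real.sinh ν)
      refine this.congr_deriv ?_
      rw [show -(c * (Real.sinh (t * ν) / Real.sinh ν)) = (ν * ν) * Real.sinh (t * ν) / Real.sinh ν by rw [hν2]; ring]
      ring



lemma sigma_le_geom (κ μ : ℝ) (hκ : κ < π ^ 2) (hμ0 : 0 < μ) (hμ1 : μ < 1) :
    ∀ t ∈ Icc (0:ℝ) 1, sigmaCoeff (μ * κ) t 1 ≤ t ^ (1 - μ) * (sigmaCoeff κ t 1) ^ μ := by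
  have hμκ : μ * κ < π ^ 2 := by
    rcases le_or_gt 0 κ with h | h
    · nlinarith
    · nlinarith [Real.pi_pos]
  obtain ⟨S', hS1, hS2⟩ := sigma_hasDeriv κ
  obtain ⟨L', hL1, hL2⟩ := sigma_hasDeriv (μ * κ)
  set S : ℝ → ℝ := fun t => sigmaCoeff κ t 1 with hSdef
  set L : ℝ → ℝ := fun t => sigmaCoeff (μ * κ) t 1 with hLdef
  set R : ℝ → ℝ := fun t => t ^ (1 - μ) * S t ^ μ with hRdef
  set R₁ : ℝ → ℝ := fun t =>
    (1 - μ) * t ^ (1 - μ - 1) * S t ^ μ + t ^ (1 - μ) * (S' t * μ * S t ^ (μ - 1)) with hR₁def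
  set R₂ : ℝ → ℝ := fun t =>
    ((1 - μ) * ((1 - μ - 1) * t ^ (1 - μ - 1 - 1))) * S t ^ μ
      + (1 - μ) * t ^ (1 - μ - 1) * (S' t * μ * S t ^ (μ - 1))
      + ((1 - μ) * t ^ (1 - μ - 1) * (S' t * μ * S t ^ (μ - 1))
        + t ^ (1 - μ) * (-(κ * S t) * μ * S t ^ (μ - 1)
          + S' t * μ * (S' t * (μ - 1) * S t ^ (μ - 1 - 1)))) with hR₂def
  have hSpos : ∀ s ∈ Ioo (0:ℝ) 1, 0 < S s := fun s hs => sigma_pos κ hκ ⟨hs.1, hs.2.le⟩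
  have hRd : ∀ s ∈ Ioo (0:ℝ) 1, HasDerivAt R (R₁ s) s := by
    intro s hs
    have hp : HasDerivAt (fun t : ℝ => t ^ (1 - μ)) ((1 - μ) * s ^ (1 - μ - 1)) s :=
      Real.hasDerivAt_rpow_const (Or.inl hs.1.ne')
    have hq : HasDerivAt (fun t => S t ^ μ) (S' s * μ * S s ^ (μ - 1)) s :=
      (hS1 s).rpow_const (Or.inl (hSpos s hs).ne')
    exact hp.mul hq
  have hRd2 : ∀ s ∈ Ioo (0:ℝ) 1, HasDerivAt R₁ (R₂ s) s := by
    intro s hs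
    have hSp := (hSpos s hs).ne'
    have hA : HasDerivAt (fun t : ℝ => (1 - μ) * t ^ (1 - μ - 1))
        ((1 - μ) * ((1 - μ - 1) * s ^ (1 - μ - 1 - 1))) s :=
      (Real.hasDerivAt_rpow_const (Or.inl hs.1.ne')).const_mul (1 - μ)
    have hB : HasDerivAt (fun t => S t ^ μ) (S' s * μ * S s ^ (μ - 1)) s :=
      (hS1 s).rpow_const (Or.inl hSp)
    have hC : HasDerivAt (fun t : ℝ => t ^ (1 - μ)) ((1 - μ) * s ^ (1 - μ - 1)) s :=
      Real.hasDerivAt_rpow_const (Or.inl hs.1.ne')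
    have hD : HasDerivAt (fun t => S' t * μ * S t ^ (μ - 1))
        ((-(κ * S s) * μ) * S s ^ (μ - 1) + (S' s * μ) * (S' s * (μ - 1) * S s ^ (μ - 1 - 1))) s :=
      ((hS2 s).mul_const μ).mul ((hS1 s).rpow_const (Or.inl hSp))
    have := (hA.mul hB).add (hC.mul hD)
    exact this
  have hode : ∀ s ∈ Ioo (0:ℝ) 1, R₂ s + μ * κ * R s ≤ 0 := by
    intro s hs
    have ha : (0:ℝ) < s := hs.1
    have hv : 0 < S s := hSpos s hs
    set a := s
    set v := S s
    set w := S' s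
    set A := a ^ (1 - μ - 1 - 1) with hAdef
    set V := v ^ (μ - 1 - 1) with hVdef
    have ea1 : a ^ (1 - μ - 1) = A * a := by
      rw [hAdef, ← Real.rpow_add_one ha.ne']
      congr 1; ring
    have ea2 : a ^ (1 - μ) = A * a * a := by
      rw [← ea1, ← Real.rpow_add_one ha.ne']
      congr 1; ring
    have ev1 : v ^ (μ - 1) = V * v := by
      rw [hVdef, ← Real.rpow_add_one hv.ne']
      congr 1; ring
    have ev2 : v ^ μ = V * v * v := by
      rw [← ev1, ← Real.rpow_add_one hv.ne']
      congr 1; ring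
    have hkey : R₂ s + μ * κ * R s = -((μ * (1 - μ)) * (A * V) * (v - a * w) ^ 2) := by
      simp only [hR₂def, hRdef]
      rw [ev2, ea2, ea1, ev1]
      ring
    rw [hkey]
    have hA0 : 0 < A := Real.rpow_pos_of_pos ha _
    have hV0 : 0 < V := Real.rpow_pos_of_pos hv _
    have h0 : 0 ≤ (μ * (1 - μ)) * (A * V) * (v - a * w) ^ 2 :=
      mul_nonneg (mul_nonneg (by nlinarith) (by positivity)) (sq_nonneg _)
    linarith
  -- apply the comparison lemma to u = L - R
  have hcomp := comp_core (μ * κ) hμκ (fun t => L t - R t) (fun t => L' t - R₁ t)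
    (fun t => -(μ * κ * L t) - R₂ t)
    (by
      apply ContinuousOn.sub (sigma_cont (μ * κ)).continuousOn
      apply ContinuousOn.mul
      · exact fun t ht => (Real.continuousAt_rpow_const t (1 - μ)
          (Or.inr (by linarith))).continuousWithinAt
      · exact fun t ht => ((Real.continuousAt_rpow_const (S t) μ
          (Or.inr hμ0.le)).comp (sigma_cont κ).continuousAt).continuousWithinAt)
    (fun s hs => (hL1 s).sub (hRd s hs))
    (fun s hs => (hL2 s).sub (hRd2 s hs))
    (by
      intro s hs
      have h := hode s hs
      show 0 ≤ -(μ * κ * L s) - R₂ s + μ * κ * (L s - R s)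
      nlinarith [h])
    (by
      show L 0 - R 0 ≤ 0
      have hL0 : L 0 = 0 := sigma_zero (μ * κ)
      have hR0 : R 0 = 0 := by
        have hS0 : S 0 = 0 := sigma_zero κ
        simp only [hRdef, hS0, Real.zero_rpow hμ0.ne', mul_zero]
      rw [hL0, hR0]; norm_num)
    (by
      show L 1 - R 1 ≤ 0
      have hLone : L 1 = 1 := sigma_one' (μ * κ) hμκ
      have hRone : R 1 = 1 := by
        have hSone : S 1 = 1 := sigma_one' κ hκ
        simp only [hRdef, hSone, Real.one_rpow, mul_one]
      rw [hLone, hRone]; norm_num)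
  intro t ht
  have := hcomp t ht
  simpa [sub_nonpos] using this

/-- `τ`-concavity from the differential inequality: if
`f'' + ((K-δ)λ²/N) f ≥ 0` on `(0,1)`, then
`f(t) ≤ τ_{K-δ,N}^{(1-t)}(λ) f(0) + τ_{K-δ,N}^{(t)}(λ) f(1)`. -/
theorem stmt_7 (K N δ lam : ℝ) (hN : 1 < N) (hδ : 0 < δ) (hlam : 0 < lam)
    (hfin : (K - δ) * lam ^ 2 < (N - 1) * Real.pi ^ 2)
    (f f' f'' : ℝ → ℝ)
    (hf : ContinuousOn f (Set.Icc 0 1))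
    (hf' : ∀ s ∈ Set.Ioo (0 : ℝ) 1, HasDerivAt f (f' s) s)
    (hf'' : ∀ s ∈ Set.Ioo (0 : ℝ) 1, HasDerivAt f' (f'' s) s)
    (hf''cont : ContinuousOn f'' (Set.Ioo 0 1))
    (hfnonneg : ∀ s ∈ Set.Icc (0 : ℝ) 1, 0 ≤ f s)
    (hode : ∀ s ∈ Set.Ioo (0 : ℝ) 1, 0 ≤ f'' s + ((K - δ) * lam ^ 2 / N) * f s) :
    ∀ t ∈ Set.Icc (0 : ℝ) 1,
      f t ≤ tauCoeff (K - δ) N (1 - t) lam * f 0 + tauCoeff (K - δ) N t lam * f 1 := by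
  have hN0 : (0:ℝ) < N := by linarith
  have hN1 : (0:ℝ) < N - 1 := by linarith
  have hpi2 : (0:ℝ) < π ^ 2 := by positivity
  set Λ' : ℝ := (K - δ) * lam ^ 2 / N with hΛdef
  have hΛπ : Λ' < π ^ 2 := by
    rw [hΛdef, div_lt_iff₀ hN0]
    nlinarith
  obtain ⟨G', hG1, hG2⟩ := sigma_hasDeriv Λ'
  -- the comparison function g
  set g : ℝ → ℝ := fun t => sigmaCoeff Λ' (1 - t) 1 * f 0 + sigmaCoeff Λ' t 1 * f 1 with hgdef
  have hArev : ∀ t : ℝ, HasDerivAt (fun t => sigmaCoeff Λ' (1 - t) 1) (-(G' (1 - t))) t := by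
    intro t
    have h := (hG1 (1 - t)).comp t ((hasDerivAt_id t).const_sub 1)
    exact h.congr_deriv (by ring)
  have hArev2 : ∀ t : ℝ, HasDerivAt (fun t => -(G' (1 - t)))
      (-(Λ' * sigmaCoeff Λ' (1 - t) 1)) t := by
    intro t
    have h := ((hG2 (1 - t)).comp t ((hasDerivAt_id t).const_sub 1)).neg
    refine h.congr_deriv ?_
    ring
  have hgd : ∀ t : ℝ, HasDerivAt g (-(G' (1 - t)) * f 0 + G' t * f 1) t := fun t =>
    ((hArev t).mul_const (f 0)).add ((hG1 t).mul_const (f 1))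
  have hgd2 : ∀ t : ℝ, HasDerivAt (fun t => -(G' (1 - t)) * f 0 + G' t * f 1)
      (-(Λ' * sigmaCoeff Λ' (1 - t) 1) * f 0 + -(Λ' * sigmaCoeff Λ' t 1) * f 1) t := fun t =>
    ((hArev2 t).mul_const (f 0)).add ((hG2 t).mul_const (f 1))
  have hgc : Continuous g := by
    rw [continuous_iff_continuousAt]; exact fun t => (hgd t).continuousAt
  -- f ≤ g on [0,1]
  have hfg : ∀ t ∈ Set.Icc (0:ℝ) 1, f t ≤ g t := by
    have hcomp := comp_core Λ' hΛπ (fun t => f t - g t)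
      (fun t => f' t - (-(G' (1 - t)) * f 0 + G' t * f 1))
      (fun t => f'' t - (-(Λ' * sigmaCoeff Λ' (1 - t) 1) * f 0 + -(Λ' * sigmaCoeff Λ' t 1) * f 1))
      (hf.sub hgc.continuousOn)
      (fun s hs => (hf' s hs).sub (hgd s))
      (fun s hs => (hf'' s hs).sub (hgd2 s))
      (by
        intro s hs
        have h := hode s hs
        show (0:ℝ) ≤ f'' s - (-(Λ' * sigmaCoeff Λ' (1 - s) 1) * f 0
          + -(Λ' * sigmaCoeff Λ' s 1) * f 1) + Λ' * (f s - g s)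
        have hg' : g s = sigmaCoeff Λ' (1 - s) 1 * f 0 + sigmaCoeff Λ' s 1 * f 1 := rfl
        rw [hg']
        have : Λ' = (K - δ) * lam ^ 2 / N := hΛdef
        nlinarith [h])
      (by
        show f 0 - g 0 ≤ 0
        have hg0 : g 0 = f 0 := by
          simp only [hgdef, sub_zero, sigma_one' Λ' hΛπ, sigma_zero, one_mul, zero_mul, add_zero]
        rw [hg0]; norm_num)
      (by
        show f 1 - g 1 ≤ 0
        have hg1 : g 1 = f 1 := by
          simp only [hgdef, sub_self, sigma_one' Λ' hΛπ, sigma_zero, one_mul, zero_mul, zero_add]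
        rw [hg1]; norm_num)
    intro t ht
    have := hcomp t ht
    simpa [sub_nonpos] using this
  -- σ ≤ τ
  set κ : ℝ := (K - δ) * lam ^ 2 / (N - 1) with hκdef
  set μ : ℝ := 1 - 1 / N with hμdef
  have hκπ : κ < π ^ 2 := by
    rw [hκdef, div_lt_iff₀ hN1]
    nlinarith
  have hμ0 : 0 < μ := by
    rw [hμdef]
    have : 1 / N < 1 := by rw [div_lt_one hN0]; linarith
    linarith
  have hμ1 : μ < 1 := by
    rw [hμdef]
    have : 0 < 1 / N := by positivity
    linarith
  have hμκ : μ * κ = Λ' := by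
    rw [hμdef, hκdef, hΛdef]
    field_simp
  have hτ : ∀ r ∈ Set.Icc (0:ℝ) 1, sigmaCoeff Λ' r 1 ≤ tauCoeff (K - δ) N r lam := by
    intro r hr
    have h := sigma_le_geom κ μ hκπ hμ0 hμ1 r hr
    rw [hμκ] at h
    refine h.trans_eq ?_
    rw [tauCoeff, sigma_scale _ lam hlam,
      show (K - δ) / (N - 1) * lam ^ 2 = κ by rw [hκdef]; ring,
      show (1:ℝ) - μ = 1 / N by rw [hμdef]; ring, hμdef]
  -- conclusion
  intro t ht
  have h1t : (1 - t) ∈ Set.Icc (0:ℝ) 1 := ⟨by linarith [ht.2], by linarith [ht.1]⟩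
  have h0mem : (0:ℝ) ∈ Set.Icc (0:ℝ) 1 := by constructor <;> norm_num
  have h1mem : (1:ℝ) ∈ Set.Icc (0:ℝ) 1 := by constructor <;> norm_num
  calc f t ≤ g t := hfg t ht
    _ = sigmaCoeff Λ' (1 - t) 1 * f 0 + sigmaCoeff Λ' t 1 * f 1 := rfl
    _ ≤ tauCoeff (K - δ) N (1 - t) lam * f 0 + tauCoeff (K - δ) N t lam * f 1 := by
        apply add_le_add
        · exact mul_le_mul_of_nonneg_right (hτ (1 - t) h1t) (hfnonneg 0 h0mem)
        · exact mul_le_mul_of_nonneg_right (hτ t ht) (hfnonneg 1 h1mem)
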